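/- Let (X, ι_X, L_X) be a Bachmann-Howard system for a prae-dilator T, with the linear order <_{ϑ_T(X)} and subterm function E_X. Then ϑρ ∈ E_X(ϑσ) implies ϑρ ≤_{ϑ_T(X)} ϑσ. -/
import Mathlib


/-! Data for a Bachmann-Howard system: `X` is a linear order, `S` is the linear order
`T_X` (the value of a prae-dilator at `X`), whose elements `σ` simultaneously index the
terms `ϑσ` making up the set `ϑ_T(X)`.  So `supp : S → Finset X` is the support function
`supp^T_X`, `ι : X → S` is the function `ι_X : X → ϑ_T(X)` (identifying terms with their
indices), and `L : X → ℕ` is the length function `L_X`. -/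
structure BHData (X S : Type) [LinearOrder X] [LinearOrder S] where
  supp : S → Finset X
  ι : X → S
  L : X → ℕ

variable {X S : Type} [LinearOrder X] [LinearOrder S]

/-- The induced length function `L_{ϑ_T(X)}(ϑσ) = max{L_X(x) | x ∈ supp σ} + 1`
(with the maximum over the empty set being `0`). -/
def BHData.Lv (D : BHData X S) (σ : S) : ℕ := (D.supp σ).sup D.L + 1

/-- `(X, ι, L)` is a Bachmann-Howard system: `L_{ϑ_T(X)} ∘ ι_X = L_X`. -/
def BHData.IsBH (D : BHData X S) : Prop := ∀ x : X, D.Lv (D.ι x) = D.L x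

/-- The recursively defined relation `ϑσ <_{ϑ_T(X)} ϑτ`: either
(i) `σ <_{T_X} τ` and `ι_X(x) < ϑτ` for all `x ∈ supp σ`, or
(ii) `τ <_{T_X} σ` and `ϑσ ≤ ι_X(x)` for some `x ∈ supp τ`
(the clause (ii) is split according to `ϑσ < ι_X(x)` or `ϑσ = ι_X(x)`).
For a Bachmann-Howard system this least fixed point satisfies the defining
recursion, which is well-founded along `Lv`. -/
inductive BHData.lt (D : BHData X S) : S → S → Prop
  | left {σ τ : S} : σ < τ → (∀ x ∈ D.supp σ, D.lt (D.ι x) τ) → D.lt σ τ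
  | right_lt {σ τ : S} (x : X) : τ < σ → x ∈ D.supp τ → D.lt σ (D.ι x) → D.lt σ τ
  | right_eq {σ τ : S} (x : X) : τ < σ → x ∈ D.supp τ → σ = D.ι x → D.lt σ τ


private lemma BHData.aux_mem_self (D : BHData X S) (E : S → Finset S)
    (hE : ∀ σ ρ : S, ρ ∈ E σ ↔ ρ = σ ∨ ∃ x ∈ D.supp σ, ρ ∈ E (D.ι x)) (σ : S) :
    σ ∈ E σ := (hE σ σ).2 (Or.inl rfl)

private lemma BHData.aux_Lv_ιlt (D : BHData X S) (hD : D.IsBH) {σ : S} {x : X}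
    (hx : x ∈ D.supp σ) : D.Lv (D.ι x) < D.Lv σ := by
  rw [hD x]
  exact Nat.lt_succ_of_le (Finset.le_sup hx)

private lemma BHData.aux_Lv_le (D : BHData X S) (hD : D.IsBH) (E : S → Finset S)
    (hE : ∀ σ ρ : S, ρ ∈ E σ ↔ ρ = σ ∨ ∃ x ∈ D.supp σ, ρ ∈ E (D.ι x)) :
    ∀ n ρ σ, D.Lv σ ≤ n → ρ ∈ E σ → D.Lv ρ ≤ D.Lv σ := by
  intro n
  induction n with
  | zero => intro ρ σ h _; cases Nat.not_succ_le_zero _ (le_trans (Nat.succ_le_of_lt (Nat.succ_pos _)) h)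
  | succ n ih =>
    intro ρ σ hn hmem
    rcases (hE σ ρ).1 hmem with rfl | ⟨x, hx, hx2⟩
    · exact le_rfl
    · have h1 := D.aux_Lv_ιlt hD hx
      exact le_trans (ih ρ (D.ι x) (by omega) hx2) (le_of_lt h1)

private lemma BHData.aux_trans (D : BHData X S) (hD : D.IsBH) (E : S → Finset S)
    (hE : ∀ σ ρ : S, ρ ∈ E σ ↔ ρ = σ ∨ ∃ x ∈ D.supp σ, ρ ∈ E (D.ι x)) :
    ∀ n τ ρ σ, D.Lv σ ≤ n → τ ∈ E ρ → ρ ∈ E σ → τ ∈ E σ := by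
  intro n
  induction n with
  | zero => intro τ ρ σ h _ _; cases Nat.not_succ_le_zero _ (le_trans (Nat.succ_le_of_lt (Nat.succ_pos _)) h)
  | succ n ih =>
    intro τ ρ σ hn h1 h2
    rcases (hE σ ρ).1 h2 with rfl | ⟨x, hx, hx2⟩
    · exact h1
    · have := D.aux_Lv_ιlt hD hx
      exact (hE σ τ).2 (Or.inr ⟨x, hx, ih τ ρ (D.ι x) (by omega) h1 hx2⟩)

/-- Subterms are weakly smaller: `ϑρ ∈ E(ϑσ)` implies `ϑρ ≤_{ϑ_T(X)} ϑσ`. -/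
theorem BHData.subterm_le (D : BHData X S) (hD : D.IsBH) (E : S → Finset S)
    (hE : ∀ σ ρ : S, ρ ∈ E σ ↔ ρ = σ ∨ ∃ x ∈ D.supp σ, ρ ∈ E (D.ι x)) :
    ∀ ρ σ : S, ρ ∈ E σ → D.lt ρ σ ∨ ρ = σ := by
  have main : ∀ n ρ σ, D.Lv ρ + D.Lv σ ≤ n → ρ ∈ E σ → D.lt ρ σ ∨ ρ = σ := by
    intro n
    induction n with
    | zero => intro ρ σ h _
              cases Nat.not_succ_le_zero _ (le_trans (Nat.succ_le_of_lt (Nat.succ_pos _)) (le_trans (Nat.le_add_left _ _) h))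
    | succ n ih =>
      intro ρ σ hn hmem
      rcases (hE σ ρ).1 hmem with rfl | ⟨x, hx, hx2⟩
      · exact Or.inr rfl
      · have hxlt : D.Lv (D.ι x) < D.Lv σ := D.aux_Lv_ιlt hD hx
        have hρlt : D.Lv ρ < D.Lv σ :=
          lt_of_le_of_lt (D.aux_Lv_le hD E hE (D.Lv (D.ι x)) ρ (D.ι x) le_rfl hx2) hxlt
        have hne : ρ ≠ σ := by
          intro h; rw [h] at hρlt; exact lt_irrefl _ hρlt
        left
        rcases lt_trichotomy ρ σ with hlt | heq | hgt
        · -- clause (i)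
          refine BHData.lt.left hlt ?_
          intro y hy
          have hyρ : D.ι y ∈ E ρ := (hE ρ (D.ι y)).2 (Or.inr ⟨y, hy, D.aux_mem_self E hE _⟩)
          have hyσ : D.ι y ∈ E σ := D.aux_trans hD E hE (D.Lv σ) (D.ι y) ρ σ le_rfl hyρ hmem
          have hylt : D.Lv (D.ι y) < D.Lv ρ := D.aux_Lv_ιlt hD hy
          rcases ih (D.ι y) σ (by omega) hyσ with h | h
          · exact h
          · exfalso
            have : D.Lv σ < D.Lv ρ := h ▸ hylt
            omega
        · exact absurd heq hne
        · -- clause (ii)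
          rcases ih ρ (D.ι x) (by omega) hx2 with h | h
          · exact BHData.lt.right_lt x hgt hx h
          · exact BHData.lt.right_eq x hgt hx h
  intro ρ σ hmem
  exact main (D.Lv ρ + D.Lv σ) ρ σ le_rfl hmem
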